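/- Let q ∈ ℂ ∖ {0} be not a root of unity and let γ₁, γ₂ ∈ ℂ(s) be nonzero. Suppose there exists a pair (h₁', h₂') ∈ ℂ(s)² with (h₁', h₂') ≠ (0, 0) satisfying γ₁·h₁' + γ₂·h₂' = 0, (h₁')^{ι₁} = ε₁·h₁' and (h₂')^{ι₂} = ε₂·h₂' for some signs ε₁, ε₂ ∈ {+1, −1} with ε₁ = +1 or ε₂ = +1. Then the only pair (h₁, h₂) ∈ ℂ(s)² satisfying γ₁·h₁ + γ₂·h₂ = 0 with h₁^{ι₁} = −h₁ and h₂^{ι₂} = −h₂ is (h₁, h₂) = (0, 0). -/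

import Mathlib

/-!
Statement 9 (wrong signs): if q is not a root of unity and there is a nonzero signed
solution (h₁', h₂') of γ₁h₁' + γ₂h₂' = 0 with signs (ε₁, ε₂) where ε₁ = +1 or ε₂ = +1,
then the homogeneous decoupling equation (with signs (−1, −1)) has only the trivial
solution.
-/

noncomputable section

section Aux
open Polynomial

lemma coeff_comp_C_mul_X (p : ℂ[X]) (r : ℂ) (k : ℕ) :
    (p.comp (C r * X)).coeff k = r ^ k * p.coeff k := by
  induction p using Polynomial.induction_on' with
  | add f g hf hg => simp [add_comp, hf, hg, mul_add]
  | monomial n a =>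
    rw [monomial_comp, mul_pow, ← C_pow, ← mul_assoc, ← C_mul]
    rw [coeff_C_mul, coeff_X_pow, coeff_monomial]
    rcases eq_or_ne n k with rfl | h
    · simp [mul_comm]
    · simp [h, Ne.symm h]

lemma key_monomial (r : ℂ) (hr : r ≠ 0) (hroot : ∀ n : ℕ, 1 ≤ n → r ^ n ≠ 1)
    (p : ℂ[X]) (hp : p ≠ 0) (hd : p ∣ p.comp (C r * X)) :
    p.comp (C r * X) = C (r ^ p.natDegree) * p ∧
      ∀ k, k ≠ p.natDegree → p.coeff k = 0 := by
  obtain ⟨u, hu⟩ := hd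
  have hcompne : p.comp (C r * X) ≠ 0 := by
    intro h
    have := coeff_comp_C_mul_X p r p.natDegree
    rw [h, coeff_zero, coeff_natDegree] at this
    exact hp (leadingCoeff_eq_zero.mp (by
      field_simp at this
      simpa [hr] using this))
  have hune : u ≠ 0 := by rintro rfl; simp [hu] at hcompne
  have hdeg : (p.comp (C r * X)).natDegree = p.natDegree := by
    rw [natDegree_comp, natDegree_C_mul_X r hr, mul_one]
  have hudeg : u.natDegree = 0 := by
    have := hdeg
    rw [hu, natDegree_mul hp hune] at this
    omega
  have hueq : u = C (u.coeff 0) := eq_C_of_natDegree_eq_zero hudeg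
  have hval : u.coeff 0 = r ^ p.natDegree := by
    have h1 := coeff_comp_C_mul_X p r p.natDegree
    rw [hu, hueq] at h1
    rw [mul_comm, coeff_C_mul, coeff_natDegree] at h1
    have hlc : p.leadingCoeff ≠ 0 := leadingCoeff_ne_zero.mpr hp
    field_simp at h1
    exact h1
  have hcomp : p.comp (C r * X) = C (r ^ p.natDegree) * p := by
    rw [hu, hueq, hval, mul_comm]
  refine ⟨hcomp, fun k hk => ?_⟩
  rcases lt_or_gt_of_ne hk with hlt | hgt
  · by_contra hpk
    have h1 := coeff_comp_C_mul_X p r k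
    rw [hcomp, coeff_C_mul] at h1
    have : r ^ k = r ^ p.natDegree := by
      field_simp at h1
      tauto
    have h2 : r ^ (p.natDegree - k) = 1 := by
      have hk' : k + (p.natDegree - k) = p.natDegree := by omega
      rw [← hk', pow_add] at this
      have hk0 : r ^ k ≠ 0 := pow_ne_zero _ hr
      have h3 : r ^ k * 1 = r ^ k * r ^ (p.natDegree - k) := by
        rw [mul_one]; exact this
      exact (mul_left_cancel₀ hk0 h3).symm
    exact hroot _ (by omega) h2
  · exact coeff_eq_zero_of_natDegree_lt hgt

lemma pow_exp_inj (r : ℂ) (hr : r ≠ 0) (hroot : ∀ n : ℕ, 1 ≤ n → r ^ n ≠ 1)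
    {a b : ℕ} (h : r ^ a = r ^ b) : a = b := by
  rcases lt_trichotomy a b with hlt | heq | hgt
  · exfalso
    apply hroot (b - a) (by omega)
    have hb : a + (b - a) = b := by omega
    rw [← hb, pow_add] at h
    have h3 : r ^ a * 1 = r ^ a * r ^ (b - a) := by rw [mul_one]; exact h
    exact (mul_left_cancel₀ (pow_ne_zero _ hr) h3).symm
  · exact heq
  · exfalso
    apply hroot (a - b) (by omega)
    have hb : b + (a - b) = a := by omega
    rw [← hb, pow_add] at h
    have h3 : r ^ b * r ^ (a - b) = r ^ b * 1 := by rw [mul_one]; exact h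
    exact mul_left_cancel₀ (pow_ne_zero _ hr) h3

lemma algebraMap_eq_aeval (g : ℂ[X]) :
    algebraMap ℂ[X] (RatFunc ℂ) g = aeval RatFunc.X g := by
  induction g using Polynomial.induction_on' with
  | add f g hf hg => rw [map_add, map_add, hf, hg]
  | monomial n a =>
    rw [aeval_monomial, ← Polynomial.C_mul_X_pow_eq_monomial, map_mul, map_pow,
      RatFunc.algebraMap_C, RatFunc.algebraMap_X, RatFunc.algebraMap_eq_C]

lemma comp_C_mul_X_ne_zero (r : ℂ) (hr : r ≠ 0) {g : ℂ[X]} (hg : g ≠ 0) :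
    g.comp (C r * X) ≠ 0 := by
  intro h
  have h1 := coeff_comp_C_mul_X g r g.natDegree
  rw [h, coeff_zero, coeff_natDegree] at h1
  exact (mul_ne_zero (pow_ne_zero _ hr) (leadingCoeff_ne_zero.mpr hg)) h1.symm

lemma fixed_const (r : ℂ) (hr : r ≠ 0) (hroot : ∀ n : ℕ, 1 ≤ n → r ^ n ≠ 1)
    (σ : RatFunc ℂ ≃ₐ[ℂ] RatFunc ℂ)
    (hσ : σ RatFunc.X = RatFunc.C r * RatFunc.X)
    (f : RatFunc ℂ) (hf : σ f = f) : ∃ c : ℂ, f = RatFunc.C c := by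
  by_cases hf0 : f = 0
  · exact ⟨0, by simp [hf0]⟩
  have hmap : ∀ g : ℂ[X], σ (algebraMap ℂ[X] (RatFunc ℂ) g)
      = algebraMap ℂ[X] (RatFunc ℂ) (g.comp (C r * X)) := by
    intro g
    rw [algebraMap_eq_aeval, algebraMap_eq_aeval, aeval_comp,
      ← Polynomial.aeval_algHom_apply σ RatFunc.X g, hσ]
    congr 1
    simp [RatFunc.algebraMap_eq_C]
  set p := f.num with hpdef
  set d := f.denom with hddef
  have hp : p ≠ 0 := RatFunc.num_ne_zero hf0
  have hd : d ≠ 0 := f.denom_ne_zero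
  have hfd := f.num_div_denom
  have hcne : algebraMap ℂ[X] (RatFunc ℂ) (d.comp (C r * X)) ≠ 0 :=
    RatFunc.algebraMap_ne_zero (comp_C_mul_X_ne_zero r hr hd)
  have hdne : algebraMap ℂ[X] (RatFunc ℂ) d ≠ 0 := RatFunc.algebraMap_ne_zero hd
  have hf' : algebraMap ℂ[X] (RatFunc ℂ) (p.comp (C r * X)) /
      algebraMap ℂ[X] (RatFunc ℂ) (d.comp (C r * X)) =
      algebraMap ℂ[X] (RatFunc ℂ) p / algebraMap ℂ[X] (RatFunc ℂ) d := by
    rw [← hmap, ← hmap, ← map_div₀, hfd, hf, ← hfd]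
  rw [div_eq_div_iff hcne hdne, ← map_mul, ← map_mul] at hf'
  have hid : p.comp (C r * X) * d = p * d.comp (C r * X) :=
    RatFunc.algebraMap_injective ℂ hf'
  have hcop := f.isCoprime_num_denom
  have hdvd1 : p ∣ p.comp (C r * X) :=
    hcop.dvd_of_dvd_mul_right ⟨d.comp (C r * X), hid⟩
  have hdvd2 : d ∣ d.comp (C r * X) := by
    apply hcop.symm.dvd_of_dvd_mul_left
    rw [← hid]
    exact dvd_mul_left d _
  obtain ⟨hc1, hm1⟩ := key_monomial r hr hroot p hp hdvd1
  obtain ⟨hc2, hm2⟩ := key_monomial r hr hroot d hd hdvd2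
  rw [hc1, hc2] at hid
  have hpd : p * d ≠ 0 := mul_ne_zero hp hd
  have h4 : C (r ^ p.natDegree) * (p * d) = C (r ^ d.natDegree) * (p * d) := by
    linear_combination hid
  have h5 : (r : ℂ) ^ p.natDegree = r ^ d.natDegree :=
    Polynomial.C_injective (mul_right_cancel₀ hpd h4)
  have hnm : p.natDegree = d.natDegree := pow_exp_inj r hr hroot h5
  rcases Nat.eq_zero_or_pos p.natDegree with h0 | hpos
  · have hd1 : d = 1 := (f.monic_denom.natDegree_eq_zero).mp (hnm ▸ h0)
    refine ⟨p.coeff 0, ?_⟩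
    rw [← hfd]
    show algebraMap ℂ[X] (RatFunc ℂ) p / algebraMap ℂ[X] (RatFunc ℂ) d = _
    rw [hd1, eq_C_of_natDegree_eq_zero h0]
    simp [RatFunc.algebraMap_C]
  · exfalso
    have hXp : X ∣ p := X_dvd_iff.mpr (hm1 0 (by omega))
    have hXd : X ∣ d := X_dvd_iff.mpr (hm2 0 (by omega))
    exact Polynomial.not_isUnit_X (hcop.isUnit_of_dvd' hXp hXd)

end Aux

theorem statement9 (q : ℂ) (hq : q ≠ 0) (hroot : ∀ n : ℕ, 1 ≤ n → q ^ n ≠ 1)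
    (ι₁ ι₂ : RatFunc ℂ ≃ₐ[ℂ] RatFunc ℂ)
    (hι₁ : ι₁ RatFunc.X = RatFunc.X⁻¹)
    (hι₂ : ι₂ RatFunc.X = RatFunc.C q * RatFunc.X⁻¹)
    (γ₁ γ₂ : RatFunc ℂ) (hγ₁ : γ₁ ≠ 0) (hγ₂ : γ₂ ≠ 0)
    (ε₁ ε₂ : ℂ) (hε₁ : ε₁ = 1 ∨ ε₁ = -1) (hε₂ : ε₂ = 1 ∨ ε₂ = -1)
    (hsign : ε₁ = 1 ∨ ε₂ = 1)
    (h₁' h₂' : RatFunc ℂ) (hne : ¬(h₁' = 0 ∧ h₂' = 0))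
    (hrel' : γ₁ * h₁' + γ₂ * h₂' = 0)
    (hs₁' : ι₁ h₁' = RatFunc.C ε₁ * h₁') (hs₂' : ι₂ h₂' = RatFunc.C ε₂ * h₂') :
    ∀ h₁ h₂ : RatFunc ℂ, γ₁ * h₁ + γ₂ * h₂ = 0 →
      ι₁ h₁ = -h₁ → ι₂ h₂ = -h₂ → h₁ = 0 ∧ h₂ = 0 := by
  intro h₁ h₂ hrel hs₁ hs₂
  -- it suffices to show h₁ = 0
  suffices hh₁ : h₁ = 0 by
    refine ⟨hh₁, ?_⟩
    rw [hh₁, mul_zero, zero_add] at hrel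
    exact (mul_eq_zero.mp hrel).resolve_left hγ₂
  by_contra hh₁0
  have hh₂0 : h₂ ≠ 0 := by
    rintro rfl
    rw [mul_zero, add_zero] at hrel
    exact hh₁0 ((mul_eq_zero.mp hrel).resolve_left hγ₁)
  have hh₁'0 : h₁' ≠ 0 := by
    rintro rfl
    rw [mul_zero, zero_add] at hrel'
    exact hne ⟨rfl, (mul_eq_zero.mp hrel').resolve_left hγ₂⟩
  have hh₂'0 : h₂' ≠ 0 := by
    rintro rfl
    rw [mul_zero, add_zero] at hrel'
    exact hne ⟨(mul_eq_zero.mp hrel').resolve_left hγ₁, rfl⟩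
  -- square facts about signs
  have hε₁sq : ε₁ * ε₁ = 1 := by rcases hε₁ with rfl | rfl <;> ring
  have hε₂sq : ε₂ * ε₂ = 1 := by rcases hε₂ with rfl | rfl <;> ring
  have hCε₁ : RatFunc.C ε₁ * RatFunc.C ε₁ = 1 := by
    rw [← map_mul, hε₁sq, map_one]
  have hCε₂ : RatFunc.C ε₂ * RatFunc.C ε₂ = 1 := by
    rw [← map_mul, hε₂sq, map_one]
  set f : RatFunc ℂ := h₁ / h₁' with hfdef
  have hf0 : f ≠ 0 := div_ne_zero hh₁0 hh₁'0
  have hcross : h₁ * h₂' = h₂ * h₁' := by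
    have h5 : γ₁ * (h₁ * h₂' - h₂ * h₁') = 0 := by
      linear_combination h₂' * hrel - h₂ * hrel'
    have := (mul_eq_zero.mp h5).resolve_left hγ₁
    linear_combination this
  have hf2 : f = h₂ / h₂' := by
    rw [hfdef, div_eq_div_iff hh₁'0 hh₂'0]
    linear_combination hcross
  have hι₁f : ι₁ f = -(RatFunc.C ε₁ * f) := by
    rw [hfdef, map_div₀, hs₁, hs₁', div_eq_iff (mul_ne_zero (by
      intro h; rw [h, mul_zero] at hCε₁; exact one_ne_zero hCε₁.symm) hh₁'0)]
    field_simp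
    linear_combination hCε₁
  have hι₂f : ι₂ f = -(RatFunc.C ε₂ * f) := by
    rw [hf2, map_div₀, hs₂, hs₂', div_eq_iff (mul_ne_zero (by
      intro h; rw [h, mul_zero] at hCε₂; exact one_ne_zero hCε₂.symm) hh₂'0)]
    field_simp
    linear_combination hCε₂
  -- fix by C: AlgEquiv commutes with constants
  have hC : ∀ (ι : RatFunc ℂ ≃ₐ[ℂ] RatFunc ℂ) (a : ℂ), ι (RatFunc.C a) = RatFunc.C a := by
    intro ι a
    rw [← RatFunc.algebraMap_eq_C]
    exact ι.commutes a
  set σ : RatFunc ℂ ≃ₐ[ℂ] RatFunc ℂ := ι₂.trans ι₁ with hσdef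
  have hσX : σ RatFunc.X = RatFunc.C q * RatFunc.X := by
    rw [hσdef, AlgEquiv.trans_apply, hι₂, map_mul, hC, map_inv₀, hι₁, inv_inv]
  have hσf : σ f = RatFunc.C (ε₁ * ε₂) * f := by
    rw [hσdef, AlgEquiv.trans_apply, hι₂f, map_neg, map_mul, hC, hι₁f, map_mul]
    ring
  set τ : RatFunc ℂ ≃ₐ[ℂ] RatFunc ℂ := σ.trans σ with hτdef
  have hτX : τ RatFunc.X = RatFunc.C (q * q) * RatFunc.X := by
    rw [hτdef, AlgEquiv.trans_apply, hσX, map_mul, hC, hσX, map_mul, ← mul_assoc]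
  have hτf : τ f = f := by
    rw [hτdef, AlgEquiv.trans_apply, hσf, map_mul, hC, hσf, ← mul_assoc, ← map_mul]
    have : (ε₁ * ε₂) * (ε₁ * ε₂) = 1 := by
      linear_combination (ε₂ * ε₂) * hε₁sq + hε₂sq
    rw [this, map_one, one_mul]
  have hq2 : q * q ≠ 0 := mul_ne_zero hq hq
  have hroot2 : ∀ n : ℕ, 1 ≤ n → (q * q) ^ n ≠ 1 := by
    intro n hn
    rw [← pow_two, ← pow_mul]
    exact hroot (2 * n) (by omega)
  obtain ⟨c, hcf⟩ := fixed_const (q * q) hq2 hroot2 τ hτX f hτf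
  -- now use the sign condition
  have hfc : ι₁ f = f ∧ ι₂ f = f := ⟨by rw [hcf]; exact hC ι₁ c, by rw [hcf]; exact hC ι₂ c⟩
  have hCinj : Function.Injective (RatFunc.C : ℂ → RatFunc ℂ) := by
    rw [← RatFunc.algebraMap_eq_C]
    exact (algebraMap ℂ (RatFunc ℂ)).injective
  have hc0 : c = 0 → False := by
    intro hc
    exact hf0 (by rw [hcf, hc, map_zero])
  rcases hsign with rfl | h
  · -- ε₁ = 1
    rw [map_one, one_mul, hfc.1, hcf, ← map_neg] at hι₁f
    have hc := hCinj hι₁f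
    exact hc0 (by linear_combination (1/2 : ℂ) * hc)
  · -- ε₂ = 1
    rw [h, map_one, one_mul, hfc.2, hcf, ← map_neg] at hι₂f
    have hc := hCinj hι₂f
    exact hc0 (by linear_combination (1/2 : ℂ) * hc)
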